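/- Let p be a prime with p ≡ 2 or 3 (mod 5) and r a positive integer. Define φ_O : (F_{p²})^r → M_{2×2r}(F_p) by sending (c_1+d_1ω, …, c_r+d_rω) to the 2×2r matrix whose i-th 2×2 block is [[d_i, c_i],[c_i+d_i, d_i]]. Then the image φ_O((F_{p²})^r) is an F_p-linear subspace of M_{2×2r}(F_p) of dimension 2r in which every nonzero element has rank 2; i.e., it is a [2×2r, 2r, 2] rank-metric code. -/

import Mathlib

/-- The 2×2r matrix whose i-th 2×2 block is [[dᵢ, cᵢ],[cᵢ+dᵢ, dᵢ]]. -/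
def blockPhi (p r : ℕ) (c d : Fin r → ZMod p) : Matrix (Fin 2) (Fin (2 * r)) (ZMod p) :=
  Matrix.of fun u j =>
    if u = (0 : Fin 2) then
      (if (j : ℕ) % 2 = 0 then d ⟨(j : ℕ) / 2, by have := j.isLt; omega⟩
       else c ⟨(j : ℕ) / 2, by have := j.isLt; omega⟩)
    else
      (if (j : ℕ) % 2 = 0 then
        c ⟨(j : ℕ) / 2, by have := j.isLt; omega⟩ + d ⟨(j : ℕ) / 2, by have := j.isLt; omega⟩
       else d ⟨(j : ℕ) / 2, by have := j.isLt; omega⟩)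

open Matrix

lemma noroot (p : ℕ) (hp : p.Prime) (h5 : p % 5 = 2 ∨ p % 5 = 3) :
    ∀ μ : ZMod p, μ * μ ≠ μ + 1 := by
  have h2 : ¬ IsSquare (((2:ℕ) : ZMod 5)) := by decide
  have h3 : ¬ IsSquare (((3:ℕ) : ZMod 5)) := by decide
  haveI := Fact.mk hp
  intro μ hμ
  rcases eq_or_ne p 2 with rfl | hp2
  · revert hμ; revert μ; decide
  · have h5sq : IsSquare ((5 : ℕ) : ZMod p) := by
      refine ⟨2 * μ - 1, ?_⟩
      push_cast
      linear_combination (-4 : ZMod p) * hμ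
    haveI : Fact (Nat.Prime 5) := ⟨by norm_num⟩
    rw [← ZMod.exists_sq_eq_prime_iff_of_mod_four_eq_one (by norm_num) hp2] at h5sq
    rw [show ((p : ℕ) : ZMod 5) = ((p % 5 : ℕ) : ZMod 5) from (ZMod.natCast_mod p 5).symm] at h5sq
    rcases h5 with h | h <;> rw [h] at h5sq
    · exact h2 h5sq
    · exact h3 h5sq

variable (p r : ℕ) [Fact p.Prime]

/-- blockPhi as a linear map. -/
def Bmap : ((Fin r → ZMod p) × (Fin r → ZMod p)) →ₗ[ZMod p]
    Matrix (Fin 2) (Fin (2 * r)) (ZMod p) where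
  toFun cd := blockPhi p r cd.1 cd.2
  map_add' x y := by
    ext u j
    simp only [blockPhi, Matrix.of_apply, Matrix.add_apply, Pi.add_apply, Prod.fst_add,
      Prod.snd_add]
    split_ifs <;> ring
  map_smul' a x := by
    ext u j
    simp only [blockPhi, Matrix.of_apply, Matrix.smul_apply, Pi.smul_apply, Prod.smul_fst,
      Prod.smul_snd, smul_eq_mul, RingHom.id_apply]
    split_ifs <;> ring

lemma Bmap_inj : Function.Injective (Bmap p r) := by
  rw [injective_iff_map_eq_zero]
  rintro ⟨c, d⟩ h
  have hc : ∀ i : Fin r, c i = 0 := by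
    intro i
    have hj : 2 * (i : ℕ) + 1 < 2 * r := by have := i.isLt; omega
    have := congrFun (congrFun h 0) ⟨2 * (i : ℕ) + 1, hj⟩
    simpa [Bmap, blockPhi, Nat.mul_add_mod, Nat.mul_add_div, Fin.eta] using this
  have hd : ∀ i : Fin r, d i = 0 := by
    intro i
    have hj : 2 * (i : ℕ) < 2 * r := by have := i.isLt; omega
    have := congrFun (congrFun h 0) ⟨2 * (i : ℕ), hj⟩
    simpa [Bmap, blockPhi, Nat.mul_mod_right, Nat.mul_div_cancel_left] using this
  ext i
  · exact hc i
  · exact hd i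

lemma rank_two (hroot : ∀ μ : ZMod p, μ * μ ≠ μ + 1) (c d : Fin r → ZMod p)
    (hne : ¬(c = 0 ∧ d = 0)) : (blockPhi p r c d).rank = 2 := by
  set M := blockPhi p r c d with hM
  have hinj : Function.Injective Mᵀ.mulVecLin := by
    rw [injective_iff_map_eq_zero]
    intro v hv
    obtain ⟨i, hi⟩ : ∃ i : Fin r, ¬(c i = 0 ∧ d i = 0) := by
      by_contra hcon
      push_neg at hcon
      exact hne ⟨funext fun i => (hcon i).1, funext fun i => (hcon i).2⟩
    set a := d i with ha
    set b := c i with hb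
    have hj0 : 2 * (i : ℕ) < 2 * r := by have := i.isLt; omega
    have hj1 : 2 * (i : ℕ) + 1 < 2 * r := by have := i.isLt; omega
    have key : ∀ (j : Fin (2 * r)), M 0 j * v 0 + M 1 j * v 1 = 0 := by
      intro j
      have := congrFun hv j
      simp only [Matrix.mulVecLin_apply, Matrix.mulVec, dotProduct, Fin.sum_univ_two,
        Matrix.transpose_apply, Pi.zero_apply] at this
      linear_combination this
    have hM00 : M 0 ⟨2 * (i : ℕ), hj0⟩ = a := by
      simp [M, blockPhi, Nat.mul_mod_right, Nat.mul_div_cancel_left, ha]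
    have hM10 : M 1 ⟨2 * (i : ℕ), hj0⟩ = b + a := by
      simp [M, blockPhi, Nat.mul_mod_right, Nat.mul_div_cancel_left, ha, hb]
    have hM01 : M 0 ⟨2 * (i : ℕ) + 1, hj1⟩ = b := by
      simp [M, blockPhi, Nat.mul_add_mod, Nat.mul_add_div, hb]
    have hM11 : M 1 ⟨2 * (i : ℕ) + 1, hj1⟩ = a := by
      simp [M, blockPhi, Nat.mul_add_mod, Nat.mul_add_div, ha]
    have eq1 : a * v 0 + (b + a) * v 1 = 0 := by
      have := key ⟨2 * (i : ℕ), hj0⟩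
      rw [hM00, hM10] at this
      exact this
    have eq2 : b * v 0 + a * v 1 = 0 := by
      have := key ⟨2 * (i : ℕ) + 1, hj1⟩
      rw [hM01, hM11] at this
      exact this
    have hdet : a * a - a * b - b * b ≠ 0 := by
      intro h0
      by_cases hb0 : b = 0
      · rw [hb0] at h0
        have : a = 0 := by
          have : a * a = 0 := by linear_combination h0
          exact (mul_self_eq_zero).mp this
        exact hi ⟨hb0, this⟩
      · apply hroot (a * b⁻¹)
        field_simp
        linear_combination h0
    have hv1 : v 1 = 0 := by
      have hkey : (a * a - a * b - b * b) * v 1 = 0 := by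
        linear_combination a * eq2 - b * eq1
      exact (mul_eq_zero.mp hkey).resolve_left hdet
    have hv0 : v 0 = 0 := by
      by_cases hb0 : b = 0
      · have ha0 : a ≠ 0 := fun h => hi ⟨hb0, h⟩
        have : a * v 0 = 0 := by linear_combination eq1 - (b + a) * hv1
        exact (mul_eq_zero.mp this).resolve_left ha0
      · have : b * v 0 = 0 := by linear_combination eq2 - a * hv1
        exact (mul_eq_zero.mp this).resolve_left hb0
    funext u
    fin_cases u
    · simpa using hv0
    · simpa using hv1
  have : Mᵀ.rank = 2 := by
    rw [Matrix.rank, LinearMap.finrank_range_of_inj hinj]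
    simp [Module.finrank_fin_fun]
  rw [← Matrix.rank_transpose, this]



/-- For p ≡ 2 or 3 (mod 5), the image of φ_O : (F_{p²})ʳ → M_{2×2r}(F_p) is an
F_p-subspace of dimension 2r all of whose nonzero elements have rank 2:
a [2×2r, 2r, 2] rank-metric code. -/
theorem stmt_7 (p : ℕ) (hp : p.Prime) (h5 : p % 5 = 2 ∨ p % 5 = 3) (r : ℕ) (hr : 1 ≤ r)
    (K : Type) [Field K] [Fintype K] [Algebra (ZMod p) K]
    (hK : Fintype.card K = p ^ 2) (ω : K)
    (hω : ∀ x : K, ∃! cd : ZMod p × ZMod p,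
      x = algebraMap (ZMod p) K cd.1 + cd.2 • ω) :
    ∃ φ : (Fin r → K) →ₗ[ZMod p] Matrix (Fin 2) (Fin (2 * r)) (ZMod p),
      (∀ c d : Fin r → ZMod p,
        φ (fun i => algebraMap (ZMod p) K (c i) + d i • ω) = blockPhi p r c d) ∧
      Function.Injective φ ∧
      Module.finrank (ZMod p) (LinearMap.range φ) = 2 * r ∧
      ∀ M ∈ LinearMap.range φ, M ≠ 0 → M.rank = 2 := by
  haveI := Fact.mk hp
  -- the parametrization as a linear map
  let ψ : ((Fin r → ZMod p) × (Fin r → ZMod p)) →ₗ[ZMod p] (Fin r → K) :=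
    { toFun := fun cd i => algebraMap (ZMod p) K (cd.1 i) + cd.2 i • ω
      map_add' := by
        intro x y
        funext i
        simp only [Prod.fst_add, Prod.snd_add, Pi.add_apply, map_add, add_smul]
        ring
      map_smul' := by
        intro a x
        funext i
        show algebraMap (ZMod p) K (a * x.1 i) + (a * x.2 i) • ω
            = a • (algebraMap (ZMod p) K (x.1 i) + x.2 i • ω)
        simp only [RingHom.map_mul, mul_smul, smul_add, Algebra.smul_def]
        ring }
  have hψinj : Function.Injective ψ := by
    intro x y hxy
    have h : ∀ i : Fin r, (x.1 i, x.2 i) = (y.1 i, y.2 i) := by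
      intro i
      obtain ⟨cd, _, huniq⟩ := hω (ψ x i)
      have h1 := huniq (x.1 i, x.2 i) rfl
      have h2 := huniq (y.1 i, y.2 i) (by show ψ x i = _; rw [hxy]; rfl)
      rw [h1, h2]
    refine Prod.ext (funext fun i => ?_) (funext fun i => ?_)
    · exact congrArg Prod.fst (h i)
    · exact congrArg Prod.snd (h i)
  have hψsurj : Function.Surjective ψ := by
    intro x
    refine ⟨(fun i => ((hω (x i)).choose).1, fun i => ((hω (x i)).choose).2), ?_⟩
    funext i
    exact ((hω (x i)).choose_spec.1).symm
  let e : ((Fin r → ZMod p) × (Fin r → ZMod p)) ≃ₗ[ZMod p] (Fin r → K) :=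
    LinearEquiv.ofBijective ψ ⟨hψinj, hψsurj⟩
  refine ⟨(Bmap p r) ∘ₗ (e.symm : (Fin r → K) →ₗ[ZMod p] _), ?_, ?_, ?_, ?_⟩
  · intro c d
    have : e (c, d) = fun i => algebraMap (ZMod p) K (c i) + d i • ω := rfl
    simp only [LinearMap.comp_apply, LinearEquiv.coe_coe, ← this, e.symm_apply_apply]
    rfl
  · exact (Bmap_inj p r).comp e.symm.injective
  · have hrange : LinearMap.range ((Bmap p r) ∘ₗ (e.symm : (Fin r → K) →ₗ[ZMod p] _)) =
        LinearMap.range (Bmap p r) := by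
      rw [LinearMap.range_comp, LinearEquiv.range, Submodule.map_top]
    rw [hrange, LinearMap.finrank_range_of_inj (Bmap_inj p r), Module.finrank_prod,
      Module.finrank_pi]
    simp [Fintype.card_fin]; ring
  · rintro M ⟨x, rfl⟩ hM0
    set cd := e.symm x with hcd
    have : (Bmap p r) cd ≠ 0 := hM0
    refine rank_two p r (noroot p hp h5) cd.1 cd.2 ?_
    rintro ⟨h1, h2⟩
    exact this (by simp only [Bmap]; rw [show cd = 0 from Prod.ext h1 h2]; exact map_zero _)
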